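/- Let K ∈ 𝕂^{p,q} with q ≥ 1. Then there exists a constant C, independent of ε, τ and λ, such that for all ε, τ > 0 and all λ > 0, |∫ K_τ(t) cos(t√λ/ε) dt| ≤ C λ^{−q/2} (ε/τ)^q. -/

import Mathlib

open MeasureTheory

open Complex FourierTransform in
private lemma itd_support {K : ℝ → ℝ} (n : ℕ) :
    Function.support (iteratedDeriv n K) ⊆ tsupport K := by
  induction n with
  | zero => simpa [iteratedDeriv_zero] using subset_tsupport K
  | succ n ih =>
      rw [iteratedDeriv_succ]
      exact support_deriv_subset.trans (closure_minimal ih (isClosed_tsupport K))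

private lemma itd_ofReal : ∀ (n : ℕ) (K : ℝ → ℝ), ContDiff ℝ n K →
    iteratedDeriv n (fun t => (K t : ℂ)) = fun t => ((iteratedDeriv n K t : ℝ) : ℂ) := by
  intro n
  induction n with
  | zero => intro K _; simp [iteratedDeriv_zero]
  | succ n ih =>
      intro K hK
      rw [iteratedDeriv_succ, iteratedDeriv_succ, ih K (hK.of_le (by exact_mod_cast Nat.le_succ n))]
      funext t
      have hd : HasDerivAt (iteratedDeriv n K) (deriv (iteratedDeriv n K) t) t :=
        ((hK.differentiable_iteratedDeriv n (by exact_mod_cast Nat.lt_succ_self n)) t).hasDerivAt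
      exact hd.ofReal_comp.deriv

open Complex FourierTransform in
/-- Decay of the time average of an oscillatory eigenmode: for `K ∈ 𝕂^{p,q}` with
`q ≥ 1`, `|∫ K_τ(t) cos(t√λ/ε) dt| ≤ C λ^{−q/2} (ε/τ)^q`, with `C` independent
of `ε`, `τ` and `λ`. -/
theorem kernel_average_oscillatory_mode
    (p q : ℕ) (hq : 1 ≤ q)
    (K : ℝ → ℝ)
    (hK_smooth : ContDiff ℝ q K)
    (hK_supp : Function.support K ⊆ Set.Icc (-1 : ℝ) 1)
    (hK_mass : (∫ t : ℝ, K t) = 1)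
    (hK_mom : ∀ r : ℕ, 1 ≤ r → r ≤ p → (∫ t : ℝ, K t * t ^ r) = 0) :
    ∃ C : ℝ, ∀ ε τ lam : ℝ, 0 < ε → 0 < τ → 0 < lam →
      |∫ t : ℝ, τ⁻¹ * K (t / τ) * Real.cos (t * Real.sqrt lam / ε)|
        ≤ C * lam ^ (-(q : ℝ) / 2) * (ε / τ) ^ q := by
  have hIcc : tsupport K ⊆ Set.Icc (-1 : ℝ) 1 := closure_minimal hK_supp isClosed_Icc
  have hcont : ∀ n : ℕ, n ≤ q → Continuous (iteratedDeriv n K) := fun n hn =>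
    hK_smooth.continuous_iteratedDeriv n (by exact_mod_cast hn)
  have hcs : ∀ n : ℕ, HasCompactSupport (iteratedDeriv n K) := fun n =>
    HasCompactSupport.intro isCompact_Icc (fun x hx => by
      by_contra h
      exact hx (hIcc (itd_support n h)))
  have hint : ∀ n : ℕ, n ≤ q → Integrable (iteratedDeriv n K) := fun n hn =>
    (hcont n hn).integrable_of_hasCompactSupport (hcs n)
  set f : ℝ → ℂ := fun t => (K t : ℂ) with hf_def
  have hf_cd : ContDiff ℝ (q : ℕ∞) f := Complex.ofRealCLM.contDiff.comp hK_smooth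
  have hf_itd : ∀ n : ℕ, n ≤ q →
      iteratedDeriv n f = fun t => ((iteratedDeriv n K t : ℝ) : ℂ) := fun n hn =>
    itd_ofReal n K (hK_smooth.of_le (by exact_mod_cast hn))
  have hf_int : ∀ n : ℕ, (n : ℕ∞) ≤ (q : ℕ∞) → Integrable (iteratedDeriv n f) := by
    intro n hn
    have hn' : n ≤ q := by exact_mod_cast hn
    rw [hf_itd n hn']
    exact (hint n hn').ofReal
  have key := Real.fourier_iteratedDeriv (N := (q : ℕ∞)) hf_cd hf_int le_rfl
  set C := ∫ v : ℝ, |iteratedDeriv q K v| with hC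
  refine ⟨C, ?_⟩
  intro ε τ lam hε hτ hlam
  have hsl : 0 < Real.sqrt lam := Real.sqrt_pos.mpr hlam
  set ω := τ * Real.sqrt lam / ε with hω
  have hω_pos : 0 < ω := by positivity
  -- Step 1: change of variables t = τ s
  have step1 : (∫ t : ℝ, τ⁻¹ * K (t / τ) * Real.cos (t * Real.sqrt lam / ε))
      = ∫ s : ℝ, K s * Real.cos (s * ω) := by
    have h1 : ∀ t : ℝ, τ⁻¹ * K (t / τ) * Real.cos (t * Real.sqrt lam / ε)
        = τ⁻¹ * (K (t / τ) * Real.cos ((t / τ) * ω)) := by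
      intro t
      have : t / τ * ω = t * Real.sqrt lam / ε := by
        rw [hω]; field_simp
      rw [this, mul_assoc]
    simp_rw [h1]
    rw [integral_const_mul, MeasureTheory.Measure.integral_comp_div (fun s => K s * Real.cos (s * ω)) τ,
      abs_of_pos hτ, smul_eq_mul, ← mul_assoc, inv_mul_cancel₀ hτ.ne', one_mul]
  -- Step 2: identify with the real part of a Fourier integral
  set ξ := ω / (2 * Real.pi) with hξ
  have hπ : (0:ℝ) < Real.pi := Real.pi_pos
  have h2πξ : 2 * Real.pi * ξ = ω := by
    rw [hξ]; field_simp
  have hξ_pos : 0 < ξ := by rw [hξ]; positivity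
  have hfint : Integrable f := by
    refine ((hint 0 (by omega)).ofReal.congr ?_)
    filter_upwards with v; simp [hf_def, iteratedDeriv_zero]
  have hInt : Integrable (fun v : ℝ => Complex.exp ((-2 * Real.pi * v * ξ : ℝ) * Complex.I) • f v) := by
    have hmul : Integrable (fun v : ℝ =>
        Complex.exp ((-2 * Real.pi * v * ξ : ℝ) * Complex.I) * f v) := by
      refine Integrable.bdd_mul (c := 1) hfint ?_ (Filter.Eventually.of_forall fun v => ?_)
      · exact (Complex.continuous_exp.comp
          ((Complex.continuous_ofReal.comp (by continuity)).mul continuous_const)).aestronglyMeasurable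
      · exact le_of_eq (Complex.norm_exp_ofReal_mul_I _)
    simpa [smul_eq_mul] using hmul
  have step2 : (∫ s : ℝ, K s * Real.cos (s * ω)) = (𝓕 f ξ).re := by
    rw [Real.fourier_real_eq_integral_exp_smul, ← RCLike.re_to_complex,
      ← integral_re hInt]
    congr 1
    funext v
    have h1 : (-2 * Real.pi * v * ξ : ℝ) = -(v * ω) := by
      rw [← h2πξ]; ring
    rw [RCLike.re_to_complex, h1]
    simp only [hf_def, smul_eq_mul, Complex.mul_re, Complex.ofReal_re, Complex.ofReal_im,
      mul_zero, sub_zero, Complex.exp_ofReal_mul_I_re, Real.cos_neg]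
    ring
  -- Step 3: decay bound from the iterated-derivative Fourier identity
  have e2 : ‖𝓕 (iteratedDeriv q f) ξ‖ ≤ C := by
    calc ‖𝓕 (iteratedDeriv q f) ξ‖ ≤ ∫ v : ℝ, ‖iteratedDeriv q f v‖ :=
          VectorFourier.norm_fourierIntegral_le_integral_norm _ _ _ _ _
    _ = C := by rw [hf_itd q le_rfl, hC]; simp
  have e3 : ‖(2 * Real.pi * Complex.I * ξ) ^ q • 𝓕 f ξ‖ = ω ^ q * ‖𝓕 f ξ‖ := by
    rw [norm_smul, norm_pow]
    congr 2
    have : ‖(2 * Real.pi * Complex.I * ξ : ℂ)‖ = 2 * Real.pi * ξ := by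
      simp [norm_mul, Complex.norm_real, abs_of_pos hπ, abs_of_pos hξ_pos]
    rw [this, h2πξ]
  have hnorm : ‖𝓕 f ξ‖ ≤ C / ω ^ q := by
    rw [le_div_iff₀ (by positivity), mul_comm, ← e3]
    calc ‖(2 * Real.pi * Complex.I * ξ) ^ q • 𝓕 f ξ‖ = ‖𝓕 (iteratedDeriv q f) ξ‖ := by
          rw [key]
    _ ≤ C := e2
  -- Assemble
  have habs : |∫ t : ℝ, τ⁻¹ * K (t / τ) * Real.cos (t * Real.sqrt lam / ε)| ≤ C / ω ^ q := by
    rw [step1, step2]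
    exact (Complex.abs_re_le_norm _).trans hnorm
  refine habs.trans (le_of_eq ?_)
  have hsq : Real.sqrt lam ^ q = lam ^ ((q : ℝ) / 2) := by
    rw [Real.sqrt_eq_rpow, ← Real.rpow_natCast (lam ^ ((1:ℝ)/2)) q, ← Real.rpow_mul hlam.le]
    ring_nf
  have hneg : lam ^ (-(q : ℝ) / 2) = (Real.sqrt lam ^ q)⁻¹ := by
    rw [hsq, ← Real.rpow_neg hlam.le]
    congr 1
    ring
  have hτq : (τ : ℝ) ^ q ≠ 0 := (pow_pos hτ q).ne'
  have hεq : (ε : ℝ) ^ q ≠ 0 := (pow_pos hε q).ne'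
  have hsq' : Real.sqrt lam ^ q ≠ 0 := (pow_pos hsl q).ne'
  rw [hneg, hω, div_pow, mul_pow, div_pow]
  field_simp
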